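/- arXiv:1204.1693 — 2 statements merged into one kernel-verified Lean document; each statement's English description precedes it below -/
import Mathlib

section
/- If Φ is an admissible subset of ℕ and m ∈ Φ, then the set mΦ = {m·x : x ∈ Φ} is also an admissible subset of ℕ. -/
/-- A subset `Φ` of `ℕ` containing `0` is admissible if for all `i, j, k ∈ Φ` with
`i + j + k ∈ Φ`, one has `i + j ∈ Φ` iff `j + k ∈ Φ`. -/
def IsAdmissible (Φ : Set ℕ) : Prop :=
  0 ∈ Φ ∧ ∀ i ∈ Φ, ∀ j ∈ Φ, ∀ k ∈ Φ, i + j + k ∈ Φ → (i + j ∈ Φ ↔ j + k ∈ Φ)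

theorem admissible_smul (Φ : Set ℕ) (hΦ : IsAdmissible Φ) (m : ℕ) (hm : m ∈ Φ) :
    IsAdmissible ((fun x => m * x) '' Φ) := by
  obtain ⟨h0, hadm⟩ := hΦ
  constructor
  · exact ⟨0, h0, by simp⟩
  rcases Nat.eq_zero_or_pos m with hm0 | hmpos
  · rintro i ⟨a, ha, rfl⟩ j ⟨b, hb, rfl⟩ k ⟨c, hc, rfl⟩ _
    subst hm0
    simp only [Nat.zero_mul, Nat.add_zero]
  rintro i ⟨a, ha, rfl⟩ j ⟨b, hb, rfl⟩ k ⟨c, hc, rfl⟩ habc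
  simp only at *
  have mem_iff : ∀ x : ℕ, m * x ∈ (fun x => m * x) '' Φ ↔ x ∈ Φ := by
    intro x
    constructor
    · rintro ⟨y, hy, hxy⟩
      have : y = x := by
        exact Nat.eq_of_mul_eq_mul_left hmpos hxy
      rwa [← this]
    · intro hx; exact ⟨x, hx, rfl⟩
  rw [← Nat.mul_add, ← Nat.mul_add, mem_iff, mem_iff]
  have habc' : a + b + c ∈ Φ := by
    rw [← mem_iff]
    convert habc using 1
    ring
  exact hadm a ha b hb c hc habc'
end

section
/- Let 𝒜 be an abelian category, M an object, and 0 → X →^α M₁ →^β Y → 0 a short exact sequence with M₁ ∈ add(M). Then the set of endomorphisms φ of X ⊕ M whose component X → X admits a lift t₁ : M₁ → M₁ with α ∘ (φ restricted to X → X) = t₁ ∘ α, and whose component X → M factors through α (i.e., equals s ∘ α for some s : M₁ → M), is closed under composition and addition and contains the identity; hence it forms a subring of End_𝒜(X ⊕ M). -/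
open CategoryTheory CategoryTheory.Limits

/-- `N` belongs to `add M`: it is a direct summand of a finite direct sum of copies of `M`. -/
def CatMemAdd {𝒜 : Type*} [Category 𝒜] [Preadditive 𝒜] [HasFiniteBiproducts 𝒜]
    (M N : 𝒜) : Prop :=
  ∃ (n : ℕ) (i : N ⟶ ⨁ fun _ : Fin n => M) (p : (⨁ fun _ : Fin n => M) ⟶ N),
    i ≫ p = 𝟙 N

/-- Let `0 → X →^α M₁ →^β Y → 0` be a short exact sequence in an abelian category with
`M₁ ∈ add M`. The set of endomorphisms `φ` of `X ⊕ M` whose `(X,X)`-component `t`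
admits a lift `t₁ : M₁ → M₁` with `t ≫ α = α ≫ t₁` and whose `(X,M)`-component factors
through `α` is a subring of `End (X ⊞ M)` (contains the identity, closed under
addition, negation and composition). -/
theorem hat_endomorphisms_subring {𝒜 : Type*} [Category 𝒜] [Abelian 𝒜]
    [HasFiniteBiproducts 𝒜] {X M₁ Y M : 𝒜}
    (α : X ⟶ M₁) (β : M₁ ⟶ Y) (w : α ≫ β = 0)
    (h : (ShortComplex.mk α β w).ShortExact) (hM₁ : CatMemAdd M M₁) :
    ∃ S : Subring (End (X ⊞ M)),
      (S : Set (End (X ⊞ M))) =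
        {φ : End (X ⊞ M) |
          (∃ t₁ : M₁ ⟶ M₁, (biprod.inl ≫ φ ≫ biprod.fst) ≫ α = α ≫ t₁) ∧
          ∃ s : M₁ ⟶ M, biprod.inl ≫ φ ≫ biprod.snd = α ≫ s} := by
  have expand : ∀ {Z : 𝒜} (f : X ⟶ X ⊞ M) (g : X ⊞ M ⟶ Z),
      f ≫ g = (f ≫ biprod.fst) ≫ biprod.inl ≫ g + (f ≫ biprod.snd) ≫ biprod.inr ≫ g := by
    intro Z f g
    conv_lhs => rw [← Category.id_comp g, ← biprod.total]
    simp only [Preadditive.add_comp, Preadditive.comp_add, Category.assoc]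
  refine ⟨{
    carrier := {φ : End (X ⊞ M) |
          (∃ t₁ : M₁ ⟶ M₁, (biprod.inl ≫ φ ≫ biprod.fst) ≫ α = α ≫ t₁) ∧
          ∃ s : M₁ ⟶ M, biprod.inl ≫ φ ≫ biprod.snd = α ≫ s}
    one_mem' := ?one
    mul_mem' := ?mul
    zero_mem' := ?zero
    add_mem' := ?add
    neg_mem' := ?neg }, rfl⟩
  case one => exact ⟨⟨𝟙 M₁, by simp [End.one_def]⟩, ⟨0, by simp [End.one_def]⟩⟩
  case zero => exact ⟨⟨0, by simp⟩, ⟨0, by simp⟩⟩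
  case add =>
    rintro a b ⟨⟨ta, hta⟩, ⟨sa, hsa⟩⟩ ⟨⟨tb, htb⟩, ⟨sb, hsb⟩⟩
    have kf : ∀ u v : X ⊞ M ⟶ X ⊞ M,
        (biprod.inl ≫ (u + v) ≫ biprod.fst) ≫ α
          = (biprod.inl ≫ u ≫ biprod.fst) ≫ α + (biprod.inl ≫ v ≫ biprod.fst) ≫ α := by
      intro u v
      simp [Preadditive.add_comp, Preadditive.comp_add]
    have ks : ∀ u v : X ⊞ M ⟶ X ⊞ M,
        biprod.inl ≫ (u + v) ≫ biprod.snd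
          = biprod.inl ≫ u ≫ biprod.snd + biprod.inl ≫ v ≫ biprod.snd := by
      intro u v
      simp [Preadditive.add_comp, Preadditive.comp_add]
    constructor
    · exact ⟨ta + tb, (kf a b).trans (by rw [hta, htb, ← Preadditive.comp_add])⟩
    · exact ⟨sa + sb, (ks a b).trans (by rw [hsa, hsb, ← Preadditive.comp_add])⟩
  case neg =>
    rintro a ⟨⟨ta, hta⟩, ⟨sa, hsa⟩⟩
    have kf : ∀ u : X ⊞ M ⟶ X ⊞ M,
        (biprod.inl ≫ (-u) ≫ biprod.fst) ≫ α = -((biprod.inl ≫ u ≫ biprod.fst) ≫ α) := by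
      intro u
      simp [Preadditive.neg_comp, Preadditive.comp_neg]
    have ks : ∀ u : X ⊞ M ⟶ X ⊞ M,
        biprod.inl ≫ (-u) ≫ biprod.snd = -(biprod.inl ≫ u ≫ biprod.snd) := by
      intro u
      simp [Preadditive.neg_comp, Preadditive.comp_neg]
    constructor
    · exact ⟨-ta, (kf a).trans (by rw [hta, ← Preadditive.comp_neg])⟩
    · exact ⟨-sa, (ks a).trans (by rw [hsa, ← Preadditive.comp_neg])⟩
  case mul =>
    rintro a b ⟨⟨ta, hta⟩, ⟨sa, hsa⟩⟩ ⟨⟨tb, htb⟩, ⟨sb, hsb⟩⟩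
    have hab : (a * b : End (X ⊞ M)) = b ≫ a := rfl
    have hta' : biprod.inl ≫ a ≫ biprod.fst ≫ α = α ≫ ta := by
      simpa using hta
    constructor
    · refine ⟨tb ≫ ta + sb ≫ (biprod.inr ≫ a ≫ biprod.fst) ≫ α, ?_⟩
      rw [hab]
      simp only [Category.assoc, Preadditive.comp_add]
      rw [← Category.assoc biprod.inl b,
        expand (biprod.inl ≫ b) (a ≫ biprod.fst ≫ α)]
      simp only [Category.assoc]
      rw [hta', reassoc_of% htb, reassoc_of% hsb]
    · refine ⟨tb ≫ sa + sb ≫ biprod.inr ≫ a ≫ biprod.snd, ?_⟩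
      rw [hab]
      simp only [Category.assoc, Preadditive.comp_add]
      rw [← Category.assoc biprod.inl b,
        expand (biprod.inl ≫ b) (a ≫ biprod.snd)]
      simp only [Category.assoc]
      rw [hsa, reassoc_of% htb, reassoc_of% hsb]
end
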